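/- For every real y > 0, one has z(1/y) = z(y); that is, the function y ↦ θ₂(y)⁴ θ₄(y)⁴ / θ₃(y)⁸ on the positive reals is invariant under the substitution y ↦ 1/y. -/

import Mathlib

/-- Jacobi theta constant θ₂ on the imaginary axis. -/
noncomputable def theta2 (y : ℝ) : ℝ := ∑' n : ℤ, Real.exp (-Real.pi * y * (n + 1/2)^2)

/-- Jacobi theta constant θ₃ on the imaginary axis. -/
noncomputable def theta3 (y : ℝ) : ℝ := ∑' n : ℤ, Real.exp (-Real.pi * y * n^2)

/-- Jacobi theta constant θ₄ on the imaginary axis. -/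
noncomputable def theta4 (y : ℝ) : ℝ := ∑' n : ℤ, (-1 : ℝ)^n * Real.exp (-Real.pi * y * n^2)

/-- The function z(y) = θ₂(y)⁴θ₄(y)⁴/θ₃(y)⁸. -/
noncomputable def zfun (y : ℝ) : ℝ := theta2 y ^ 4 * theta4 y ^ 4 / theta3 y ^ 8

open Complex Real

lemma sqrtC {y : ℝ} (hy : 0 < y) : ((Real.sqrt y : ℝ) : ℂ) = (y:ℂ) ^ (1/2 : ℂ) := by
  rw [Real.sqrt_eq_rpow, Complex.ofReal_cpow hy.le]; norm_num

lemma theta3_coe (x : ℝ) : ((theta3 x : ℝ) : ℂ) = ∑' n : ℤ, Complex.exp (-(Real.pi:ℂ) * x * (n:ℂ)^2) := by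
  unfold theta3
  rw [Complex.ofReal_tsum]
  refine tsum_congr fun n => ?_
  rw [Complex.ofReal_exp]; push_cast; ring_nf

lemma theta2_coe (x : ℝ) : ((theta2 x : ℝ) : ℂ) = ∑' n : ℤ, Complex.exp (-(Real.pi:ℂ) * x * ((n:ℂ) + 1/2)^2) := by
  unfold theta2
  rw [Complex.ofReal_tsum]
  refine tsum_congr fun n => ?_
  rw [Complex.ofReal_exp]; push_cast; ring_nf

lemma theta4_coe (x : ℝ) : ((theta4 x : ℝ) : ℂ) = ∑' n : ℤ, (-1:ℂ)^n * Complex.exp (-(Real.pi:ℂ) * x * (n:ℂ)^2) := by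
  unfold theta4
  rw [Complex.ofReal_tsum]
  refine tsum_congr fun n => ?_
  rw [Complex.ofReal_mul, Complex.ofReal_exp]; push_cast; ring_nf

lemma neg_one_zpow_exp (n : ℤ) : ((-1:ℂ))^n = Complex.exp ((n:ℂ) * (Real.pi * I)) := by
  rw [Complex.exp_int_mul, Complex.exp_pi_mul_I]

lemma theta3_inv {y : ℝ} (hy : 0 < y) : theta3 (1/y) = Real.sqrt y * theta3 y := by
  have key := Real.tsum_exp_neg_mul_int_sq hy
  have h1 : theta3 (1/y) = ∑' n : ℤ, Real.exp (-Real.pi / y * (n:ℝ)^2) := by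
    refine tsum_congr fun n => ?_
    congr 1; ring
  have hs : (0:ℝ) < y ^ (1/2 : ℝ) := Real.rpow_pos_of_pos hy _
  rw [h1, Real.sqrt_eq_rpow]
  unfold theta3
  rw [key]
  field_simp

lemma theta2_inv {y : ℝ} (hy : 0 < y) : theta2 (1/y) = Real.sqrt y * theta4 y := by
  have hyC : (0:ℝ) < ((y:ℂ)).re := by simpa using hy
  have c := Complex.tsum_exp_neg_quadratic hyC (-(I/2))
  have hL : (∑' n : ℤ, Complex.exp (-(Real.pi:ℂ) * y * (n:ℂ)^2 + 2 * Real.pi * (-(I/2)) * (n:ℂ)))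
      = ((theta4 y : ℝ) : ℂ) := by
    rw [theta4_coe]
    refine tsum_congr fun n => ?_
    have h1 : ((-1:ℂ))^n = Complex.exp ((-n:ℤ) * ((Real.pi:ℂ) * I)) := by
      rw [Complex.exp_int_mul, Complex.exp_pi_mul_I, zpow_neg, ← inv_zpow, inv_neg_one]
    rw [h1, ← Complex.exp_add]
    congr 1
    push_cast
    ring
  have hR : (∑' n : ℤ, Complex.exp (-(Real.pi:ℂ) / y * ((n:ℂ) + I * (-(I/2)))^2))
      = ((theta2 (1/y) : ℝ) : ℂ) := by
    rw [theta2_coe]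
    refine tsum_congr fun n => ?_
    congr 1
    have hy0 : (y:ℂ) ≠ 0 := by exact_mod_cast hy.ne'
    push_cast
    field_simp
    all_goals ring_nf
    all_goals simp only [Complex.I_sq, Complex.I_pow_four]
    all_goals ring
  rw [hL, hR] at c
  have hs : ((Real.sqrt y : ℝ) : ℂ) ≠ 0 := by
    simpa using (Real.sqrt_pos.mpr hy).ne'
  rw [← sqrtC hy] at c
  field_simp at c
  have : ((theta2 (1/y) : ℝ) : ℂ) = (Real.sqrt y : ℝ) * ((theta4 y : ℝ):ℂ) := by
    linear_combination -c
  exact_mod_cast this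

lemma theta4_inv {y : ℝ} (hy : 0 < y) : theta4 (1/y) = Real.sqrt y * theta2 y := by
  have hyC : (0:ℝ) < ((y:ℂ)).re := by simpa using hy
  have hy0 : (y:ℂ) ≠ 0 := by exact_mod_cast hy.ne'
  have c := Complex.tsum_exp_neg_quadratic hyC (-((y:ℂ)/2))
  have hL : (∑' n : ℤ, Complex.exp (-(Real.pi:ℂ) * y * (n:ℂ)^2 + 2 * Real.pi * (-((y:ℂ)/2)) * (n:ℂ)))
      = Complex.exp ((Real.pi:ℂ) * y / 4) * ((theta2 y : ℝ) : ℂ) := by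
    rw [theta2_coe, ← tsum_mul_left]
    refine tsum_congr fun n => ?_
    rw [← Complex.exp_add]
    congr 1
    ring
  have hR : (∑' n : ℤ, Complex.exp (-(Real.pi:ℂ) / y * ((n:ℂ) + I * (-((y:ℂ)/2)))^2))
      = Complex.exp ((Real.pi:ℂ) * y / 4) * ((theta4 (1/y) : ℝ) : ℂ) := by
    rw [theta4_coe, ← tsum_mul_left]
    refine tsum_congr fun n => ?_
    rw [neg_one_zpow_exp, ← Complex.exp_add, ← Complex.exp_add]
    congr 1
    push_cast
    field_simp
    all_goals ring_nf
    all_goals simp only [Complex.I_sq]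
    all_goals ring
  rw [hL, hR] at c
  have hs : ((Real.sqrt y : ℝ) : ℂ) ≠ 0 := by
    simpa using (Real.sqrt_pos.mpr hy).ne'
  rw [← sqrtC hy] at c
  field_simp at c
  have he : Complex.exp ((Real.pi:ℂ) * y / 4) ≠ 0 := Complex.exp_ne_zero _
  have : ((theta4 (1/y) : ℝ) : ℂ) = (Real.sqrt y : ℝ) * ((theta2 y : ℝ):ℂ) :=
    mul_left_cancel₀ he (by linear_combination -(Complex.exp ((Real.pi:ℂ) * y / 4)) * c)
  exact_mod_cast this

theorem zfun_inv_invariant : ∀ y : ℝ, 0 < y → zfun (1 / y) = zfun y := by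
  intro y hy
  unfold zfun
  rw [theta2_inv hy, theta3_inv hy, theta4_inv hy]
  have hs : Real.sqrt y ≠ 0 := (Real.sqrt_pos.mpr hy).ne'
  rw [mul_pow, mul_pow, mul_pow]
  rw [show Real.sqrt y ^ 4 * theta4 y ^ 4 * (Real.sqrt y ^ 4 * theta2 y ^ 4)
      = Real.sqrt y ^ 8 * (theta2 y ^ 4 * theta4 y ^ 4) by ring]
  rw [mul_div_mul_left _ _ (pow_ne_zero 8 hs)]
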